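/- For α = 0 and m ≥ 1, the gl(n)-module L_n^0(−m,1) decomposes as the direct sum of the n simple submodules V_n^0(−m,{ℓ}) for ℓ = 1,...,n: L_n^0(−m,1) = ⊕_{ℓ=1}^n V_n^0(−m,{ℓ}). -/

import Mathlib

open Finsupp

/-- The space of Laurent polynomials `L_n = ℂ[x₁^{±1},...,xₙ^{±1}]`,
realized as finitely supported functions from exponent vectors to ℂ.
The monomial `x^k` is `Finsupp.single k 1`. -/
abbrev Lmon (n : ℕ) : Type := (Fin n → ℤ) →₀ ℂ

/-- The α-twisted action of the matrix unit `E_{ab}` on `L_n`: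
`E_{ab} · x^k = (k_b + α_b) x^{k + e_a - e_b}`. -/
noncomputable def Eab {n : ℕ} (α : Fin n → ℂ) (a b : Fin n) :
    Lmon n →ₗ[ℂ] Lmon n :=
  Finsupp.lsum ℂ (fun k => ((k b : ℂ) + α b) •
    Finsupp.lsingle (fun i => k i + (if i = a then 1 else 0) - (if i = b then 1 else 0)))

open scoped Classical in
/-- `V_n^α(m, J)`: the span of monomials `x^k` of total degree `m` such that
`{ℓ ∈ I_α : k_ℓ < 0} ⊆ J`, where `I_α = {ℓ : α_ℓ = 0}`. -/
noncomputable def Vmod {n : ℕ} (α : Fin n → ℂ) (m : ℤ) (J : Finset (Fin n)) :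
    Submodule ℂ (Lmon n) :=
  Submodule.span ℂ {f | ∃ k : Fin n → ℤ, f = Finsupp.single k (1 : ℂ) ∧
    (∑ i, k i) = m ∧ ∀ ℓ, α ℓ = 0 → k ℓ < 0 → ℓ ∈ J}

open scoped Classical in
/-- `L_n^α(m, j)`: the span of monomials `x^k` of total degree `m` with
`|{ℓ ∈ I_α : k_ℓ < 0}| ≤ j`  (the index `j` is an integer so that `j = -1`
gives the zero module). -/
noncomputable def LmodJ {n : ℕ} (α : Fin n → ℂ) (m j : ℤ) : Submodule ℂ (Lmon n) :=
  Submodule.span ℂ {f | ∃ k : Fin n → ℤ, f = Finsupp.single k (1 : ℂ) ∧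
    (∑ i, k i) = m ∧
    ((Finset.univ.filter (fun ℓ => α ℓ = 0 ∧ k ℓ < 0)).card : ℤ) ≤ j}

/-- A subspace of `L_n` is a `𝔤𝔩(n)`-submodule (equivalently a `U(𝔤𝔩(n))`-submodule)
iff it is invariant under all the operators `E_{ab}`. -/
def glInv {n : ℕ} (α : Fin n → ℂ) (p : Submodule ℂ (Lmon n)) : Prop :=
  ∀ a b : Fin n, ∀ f ∈ p, Eab α a b f ∈ p

/-- The `U(𝔤𝔩(n))`-submodule of `L_n^α` generated by `f`: the smallest subspace
containing `f` that is invariant under all `E_{ab}`. -/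
noncomputable def genMod {n : ℕ} (α : Fin n → ℂ) (f : Lmon n) : Submodule ℂ (Lmon n) :=
  sInf {p | f ∈ p ∧ glInv α p}

def mv {n : ℕ} (a b : Fin n) (k : Fin n → ℤ) : Fin n → ℤ :=
  fun i => k i + (if i = a then 1 else 0) - (if i = b then 1 else 0)

lemma Eab_single {n : ℕ} (α : Fin n → ℂ) (a b : Fin n) (k : Fin n → ℤ) (c : ℂ) :
    Eab α a b (Finsupp.single k c) = (((k b : ℂ) + α b) * c) • Finsupp.single (mv a b k) 1 := by
  rw [Eab, Finsupp.lsum_single, LinearMap.smul_apply, Finsupp.lsingle_apply,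
      ← Finsupp.smul_single_one, smul_smul]
  rfl

lemma Ebb_apply {n : ℕ} (b : Fin n) (f : Lmon n) (k : Fin n → ℤ) :
    (Eab (0 : Fin n → ℂ) b b f) k = (k b : ℂ) * f k := by
  induction f using Finsupp.induction_linear with
  | zero => simp
  | add f g hf hg => rw [map_add, Finsupp.add_apply, hf, hg, Finsupp.add_apply]; ring
  | single k' c =>
      rw [Eab_single]
      have : mv b b k' = k' := by funext i; simp [mv]
      rw [this]
      simp [Finsupp.single_apply, Finsupp.smul_single]
      split_ifs with h
      · subst h; ring
      · simp

lemma mv_mem {n : ℕ} {p : Submodule ℂ (Lmon n)} (hp : glInv 0 p) {k : Fin n → ℤ}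
    (hk : Finsupp.single k 1 ∈ p) (a b : Fin n) (hb : k b ≠ 0) :
    Finsupp.single (mv a b k) 1 ∈ p := by
  have h := hp a b _ hk
  rw [Eab_single] at h
  have hc : ((k b : ℂ) + (0 : Fin n → ℂ) b) * 1 ≠ 0 := by
    simpa using fun h' => hb (by exact_mod_cast h')
  have := p.smul_mem (((k b : ℂ) + (0 : Fin n → ℂ) b) * 1)⁻¹ h
  rwa [smul_smul, inv_mul_cancel₀ hc, one_smul] at this

lemma extract {n : ℕ} {p : Submodule ℂ (Lmon n)} (hp : glInv 0 p) :
    ∀ N : ℕ, ∀ f : Lmon n, f ∈ p → f ≠ 0 → f.support.card ≤ N →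
    ∃ k ∈ f.support, Finsupp.single k 1 ∈ p := by
  intro N
  induction N with
  | zero =>
      intro f _ hf0 hc
      exact absurd (Finsupp.support_eq_empty.mp (Finset.card_eq_zero.mp (Nat.le_zero.mp hc))) hf0
  | succ N ih =>
      intro f hfp hf0 hc
      rcases lt_or_ge 1 f.support.card with hbig | hsmall
      · -- two distinct support elements
        obtain ⟨k₁, hk₁, k₂, hk₂, hne⟩ := Finset.one_lt_card.mp hbig
        obtain ⟨b, hb⟩ : ∃ b, k₁ b ≠ k₂ b := by
          by_contra h; push_neg at h; exact hne (funext h)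
        set g : Lmon n := Eab 0 b b f - ((k₂ b : ℂ)) • f with hg
        have hgp : g ∈ p := p.sub_mem (hp b b f hfp) (p.smul_mem _ hfp)
        have hgk : ∀ k, g k = ((k b : ℂ) - k₂ b) * f k := by
          intro k
          rw [hg]
          simp [Ebb_apply, sub_mul]
        have hsub : g.support ⊆ f.support := by
          intro k hk
          simp only [Finsupp.mem_support_iff] at hk ⊢
          intro h0; exact hk (by rw [hgk, h0, mul_zero])
        have hk2out : k₂ ∉ g.support := by
          simp [Finsupp.mem_support_iff, hgk]
        have hk1in : k₁ ∈ g.support := by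
          rw [Finsupp.mem_support_iff, hgk]
          refine mul_ne_zero ?_ (Finsupp.mem_support_iff.mp hk₁)
          intro h; apply hb
          exact_mod_cast sub_eq_zero.mp h
        have hg0 : g ≠ 0 := fun h => by simp [h] at hk1in
        have hcard : g.support.card ≤ N := by
          have hlt := Finset.card_lt_card (⟨hsub, fun h => hk2out (h hk₂)⟩ : g.support ⊂ f.support)
          omega
        obtain ⟨k, hk, hkp⟩ := ih g hgp hg0 hcard
        exact ⟨k, hsub hk, hkp⟩
      · -- support is a singleton
        have h1 : f.support.card = 1 := by
          have : f.support.Nonempty := Finsupp.support_nonempty_iff.mpr hf0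
          have := Finset.card_pos.mpr this
          omega
        obtain ⟨a, ha0, hfa⟩ := Finsupp.card_support_eq_one.mp h1
        refine ⟨a, Finsupp.mem_support_iff.mpr ha0, ?_⟩
        have h2 : (f a)⁻¹ • f = Finsupp.single a 1 := by
          conv_lhs => rw [hfa]
          simp [Finsupp.smul_single, inv_mul_cancel₀ ha0]
        exact h2 ▸ p.smul_mem (f a)⁻¹ hfp

def Sset (n : ℕ) (m : ℤ) (ℓ : Fin n) : Set (Fin n → ℤ) :=
  {k | (∑ i, k i) = -m ∧ ∀ i, k i < 0 → i = ℓ}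

lemma sum_mv {n : ℕ} (a b : Fin n) (k : Fin n → ℤ) :
    (∑ i, mv a b k i) = ∑ i, k i := by
  simp [mv, Finset.sum_add_distrib, Finset.sum_sub_distrib, Finset.sum_ite_eq']

lemma erase_sum {n : ℕ} (ℓ : Fin n) (k : Fin n → ℤ) :
    (∑ i ∈ Finset.univ.erase ℓ, k i) = (∑ i, k i) - k ℓ := by
  rw [← Finset.add_sum_erase Finset.univ k (Finset.mem_univ ℓ)]; ring

lemma mv_mem_S {n : ℕ} {m : ℤ} {ℓ i : Fin n} (hi : i ≠ ℓ) {k : Fin n → ℤ}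
    (hk : k ∈ Sset n m ℓ) (hki : 0 < k i) :
    mv ℓ i k ∈ Sset n m ℓ ∧
      (∑ j ∈ Finset.univ.erase ℓ, mv ℓ i k j) = (∑ j ∈ Finset.univ.erase ℓ, k j) - 1 := by
  obtain ⟨hsum, hneg⟩ := hk
  have hmv : ∀ j, mv ℓ i k j = k j + (if j = ℓ then 1 else 0) - (if j = i then 1 else 0) :=
    fun j => rfl
  refine ⟨⟨by rw [sum_mv, hsum], ?_⟩, ?_⟩
  · intro j hj
    by_contra hjl
    rw [hmv] at hj
    rcases eq_or_ne j i with rfl | hji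
    · simp [hjl] at hj; omega
    · have := hneg j
      simp [hjl, hji] at hj
      omega
  · rw [erase_sum, erase_sum, sum_mv, hmv]
    simp [hi.symm ∘ Eq.symm]
    omega

lemma S_nonneg {n : ℕ} {m : ℤ} {ℓ : Fin n} {k : Fin n → ℤ} (hk : k ∈ Sset n m ℓ)
    {i : Fin n} (hi : i ≠ ℓ) : 0 ≤ k i := by
  by_contra h
  exact hi (hk.2 i (by omega))

lemma S_erase_nonneg {n : ℕ} {m : ℤ} {ℓ : Fin n} {k : Fin n → ℤ} (hk : k ∈ Sset n m ℓ) :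
    0 ≤ ∑ j ∈ Finset.univ.erase ℓ, k j :=
  Finset.sum_nonneg fun j hj => S_nonneg hk (Finset.ne_of_mem_erase hj)

lemma S_base {n : ℕ} {m : ℤ} {ℓ : Fin n} {k : Fin n → ℤ} (hk : k ∈ Sset n m ℓ)
    (h0 : (∑ j ∈ Finset.univ.erase ℓ, k j) = 0) :
    k = fun j => if j = ℓ then -m else 0 := by
  have hz : ∀ j ∈ Finset.univ.erase ℓ, k j = 0 :=
    (Finset.sum_eq_zero_iff_of_nonneg
      (fun j hj => S_nonneg hk (Finset.ne_of_mem_erase hj))).mp h0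
  funext j
  rcases eq_or_ne j ℓ with rfl | hj
  · have := erase_sum j k
    rw [h0, hk.1] at this
    simp; omega
  · simp [hj, hz j (Finset.mem_erase.mpr ⟨hj, Finset.mem_univ j⟩)]

lemma S_pos_exists {n : ℕ} {m : ℤ} {ℓ : Fin n} {k : Fin n → ℤ} (hk : k ∈ Sset n m ℓ)
    (h0 : (∑ j ∈ Finset.univ.erase ℓ, k j) ≠ 0) :
    ∃ i, i ≠ ℓ ∧ 0 < k i := by
  by_contra h
  push_neg at h
  apply h0
  apply Finset.sum_eq_zero
  intro j hj
  have h1 := S_nonneg hk (Finset.ne_of_mem_erase hj)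
  have h2 := h j (Finset.ne_of_mem_erase hj)
  omega

lemma down {n : ℕ} {m : ℤ} {ℓ : Fin n} {p : Submodule ℂ (Lmon n)} (hp : glInv 0 p) :
    ∀ N : ℕ, ∀ k ∈ Sset n m ℓ, Finsupp.single k 1 ∈ p →
      (∑ j ∈ Finset.univ.erase ℓ, k j).toNat ≤ N →
      Finsupp.single (fun j => if j = ℓ then -m else 0 : Fin n → ℤ) 1 ∈ p := by
  intro N
  induction N with
  | zero =>
      intro k hk hkp hc
      have h0 : (∑ j ∈ Finset.univ.erase ℓ, k j) = 0 := by
        have := S_erase_nonneg hk; omega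
      exact S_base hk h0 ▸ hkp
  | succ N ih =>
      intro k hk hkp hc
      rcases eq_or_ne (∑ j ∈ Finset.univ.erase ℓ, k j) 0 with h0 | h0
      · exact S_base hk h0 ▸ hkp
      · obtain ⟨i, hi, hki⟩ := S_pos_exists hk h0
        obtain ⟨hk', hsum'⟩ := mv_mem_S hi hk hki
        refine ih _ hk' (mv_mem hp hkp ℓ i (by omega)) ?_
        have := S_erase_nonneg hk
        omega

lemma up {n : ℕ} {m : ℤ} (hm : 1 ≤ m) {ℓ : Fin n} {p : Submodule ℂ (Lmon n)}
    (hp : glInv 0 p)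
    (hbase : Finsupp.single (fun j => if j = ℓ then -m else 0 : Fin n → ℤ) 1 ∈ p) :
    ∀ N : ℕ, ∀ k ∈ Sset n m ℓ, (∑ j ∈ Finset.univ.erase ℓ, k j).toNat ≤ N →
      Finsupp.single k 1 ∈ p := by
  intro N
  induction N with
  | zero =>
      intro k hk hc
      have h0 : (∑ j ∈ Finset.univ.erase ℓ, k j) = 0 := by
        have := S_erase_nonneg hk; omega
      exact (S_base hk h0) ▸ hbase
  | succ N ih =>
      intro k hk hc
      rcases eq_or_ne (∑ j ∈ Finset.univ.erase ℓ, k j) 0 with h0 | h0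
      · exact (S_base hk h0) ▸ hbase
      · obtain ⟨i, hi, hki⟩ := S_pos_exists hk h0
        obtain ⟨hk', hsum'⟩ := mv_mem_S hi hk hki
        have hmem' : Finsupp.single (mv ℓ i k) 1 ∈ p := by
          refine ih _ hk' ?_
          have := S_erase_nonneg hk
          omega
        -- k ℓ value: k ℓ = -m - (sum erase) ≤ -m - k i < 0, so (mv ℓ i k) ℓ = k ℓ + 1 < 0
        have hkl : (mv ℓ i k) ℓ ≠ 0 := by
          have h1 : (∑ j ∈ Finset.univ.erase ℓ, k j) ≥ k i :=
            Finset.single_le_sum (f := k)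
              (fun j hj => S_nonneg hk (Finset.ne_of_mem_erase hj))
              (Finset.mem_erase.mpr ⟨hi, Finset.mem_univ i⟩)
          have h2 := erase_sum ℓ k
          have h3 := hk.1
          have : (mv ℓ i k) ℓ = k ℓ + 1 := by simp [mv, hi.symm ∘ Eq.symm, Ne.symm hi]
          omega
        have := mv_mem hp hmem' i ℓ hkl
        have hmv : mv i ℓ (mv ℓ i k) = k := by
          funext j; simp [mv]
        rwa [hmv] at this

lemma Vmod_eq (n : ℕ) (m : ℤ) (ℓ : Fin n) :
    Vmod (0 : Fin n → ℂ) (-m) {ℓ} = Finsupp.supported ℂ ℂ (Sset n m ℓ) := by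
  rw [Finsupp.supported_eq_span_single, Vmod]
  congr 1
  ext f
  constructor
  · rintro ⟨k, rfl, hs, hneg⟩
    exact ⟨k, ⟨hs, fun i hi => by simpa using hneg i rfl hi⟩, rfl⟩
  · rintro ⟨k, ⟨hs, hneg⟩, rfl⟩
    exact ⟨k, rfl, hs, fun i _ hi => by simp [hneg i hi]⟩

lemma exists_neg {n : ℕ} {m : ℤ} (hm : 1 ≤ m) {k : Fin n → ℤ} (hs : (∑ i, k i) = -m) :
    ∃ i, k i < 0 := by
  by_contra h
  push_neg at h
  have : (0:ℤ) ≤ ∑ i, k i := Finset.sum_nonneg fun i _ => h i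
  omega


/-- For `m ≥ 1`, `L_n^0(−m,1) = ⊕_{ℓ=1}^n V_n^0(−m,{ℓ})`. -/
theorem stmt_13 (n : ℕ) (m : ℤ) (hm : 1 ≤ m) :
    LmodJ (0 : Fin n → ℂ) (-m) 1 = (⨆ ℓ : Fin n, Vmod (0 : Fin n → ℂ) (-m) {ℓ}) ∧
    iSupIndep (fun ℓ : Fin n => Vmod (0 : Fin n → ℂ) (-m) {ℓ}) ∧
    ∀ ℓ : Fin n, ∀ p : Submodule ℂ (Lmon n), glInv (0 : Fin n → ℂ) p →
      p ≤ Vmod (0 : Fin n → ℂ) (-m) {ℓ} → p ≠ ⊥ →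
      p = Vmod (0 : Fin n → ℂ) (-m) {ℓ} := by

  classical
  refine ⟨?_, ?_, ?_⟩
  · -- part 1
    apply le_antisymm
    · rw [LmodJ]
      apply Submodule.span_le.mpr
      rintro f ⟨k, rfl, hs, _⟩
      obtain ⟨i, hi⟩ := exists_neg hm hs
      have hneg : ∀ j, k j < 0 → j = i := by
        intro j hj
        by_contra hji
        have h2 : ({i, j} : Finset (Fin n)) ⊆
            Finset.univ.filter (fun ℓ => (0 : Fin n → ℂ) ℓ = 0 ∧ k ℓ < 0) := by
          intro x hx
          simp only [Finset.mem_insert, Finset.mem_singleton] at hx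
          rcases hx with rfl | rfl <;> simp [hi, hj]
        have := Finset.card_le_card h2
        rw [Finset.card_pair (Ne.symm hji)] at this
        rename_i hcard
        omega
      have : Finsupp.single k (1:ℂ) ∈ Finsupp.supported ℂ ℂ (Sset n m i) := by
        rw [Finsupp.mem_supported, Finsupp.support_single_ne_zero _ one_ne_zero]
        simpa [Sset] using (⟨hs, hneg⟩ : k ∈ Sset n m i)
      exact Submodule.mem_iSup_of_mem i ((Vmod_eq n m i).symm ▸ this)
    · apply iSup_le
      intro ℓ
      rw [Vmod, LmodJ]
      apply Submodule.span_mono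
      rintro f ⟨k, rfl, hs, hneg⟩
      refine ⟨k, rfl, hs, ?_⟩
      have hsub : Finset.univ.filter (fun j => (0 : Fin n → ℂ) j = 0 ∧ k j < 0) ⊆ {ℓ} := by
        intro x hx
        simp only [Finset.mem_filter] at hx
        simpa using hneg x (by simp) hx.2.2
      have := Finset.card_le_card hsub
      simp only [Finset.card_singleton] at this
      exact_mod_cast this
  · -- part 2: independence
    intro ℓ
    simp only [Vmod_eq]
    have h1 : (⨆ j, ⨆ (_ : j ≠ ℓ), Finsupp.supported ℂ ℂ (Sset n m j)) ≤
        Finsupp.supported ℂ ℂ {k : Fin n → ℤ | 0 ≤ k ℓ} := by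
      apply iSup_le; intro j; apply iSup_le; intro hj
      apply Finsupp.supported_mono
      intro k hk
      exact S_nonneg hk (Ne.symm hj)
    refine Disjoint.mono_right h1 (Finsupp.disjoint_supported_supported ?_)
    rw [Set.disjoint_iff]
    rintro k ⟨hk1, hk2⟩
    obtain ⟨i, hi⟩ := exists_neg hm hk1.1
    have := hk1.2 i hi
    subst this
    exact absurd hk2 (by simpa using hi)
  · -- part 3: simplicity
    intro ℓ p hp hle hne
    obtain ⟨f, hfp, hf0⟩ := Submodule.exists_mem_ne_zero_of_ne_bot hne
    obtain ⟨k, hk, hkp⟩ := extract hp f.support.card f hfp hf0 le_rfl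
    have hkS : k ∈ Sset n m ℓ := by
      have := (Vmod_eq n m ℓ) ▸ hle hfp
      rw [Finsupp.mem_supported] at this
      exact this hk
    have hbase := down hp _ k hkS hkp le_rfl
    apply le_antisymm hle
    rw [Vmod_eq]
    rw [Finsupp.supported_eq_span_single]
    apply Submodule.span_le.mpr
    rintro f ⟨k', hk', rfl⟩
    exact up hm hp hbase _ k' hk' le_rfl
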